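/- Let K be a field equipped with a nonarchimedean absolute value |·|_v, let d ≥ 2 be an integer, and let γ, λ ∈ K. If |λ|_v > max(1, |γ|_v^d), then the sequence n ↦ log⁺|f_λ^n(γ)|_v / d^n converges to (log|λ|_v)/d, which is strictly positive. -/

import Mathlib

open Filter

lemma nonarch_add_eq_right {K : Type*} [Field K] (v : AbsoluteValue K ℝ)
    (hv : IsNonarchimedean v) {x y : K} (h : v x < v y) : v (x + y) = v y := by
  refine le_antisymm ((hv x y).trans (max_le h.le le_rfl)) ?_
  by_contra hlt
  push_neg at hlt
  have hy : y = (x + y) + (-x) := by ring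
  have := hv (x + y) (-x)
  rw [← hy, v.map_neg] at this
  exact absurd this (not_le.mpr (max_lt hlt h))

/-- If `|λ|_v > max(1, |γ|_v^d)` for a nonarchimedean absolute value, then
`log⁺|f_λ^n(γ)|_v / d^n → (log|λ|_v)/d > 0`. -/
theorem local_height_of_large_parameter
    (K : Type*) [Field K] (v : AbsoluteValue K ℝ) (hv : IsNonarchimedean v)
    (d : ℕ) (hd : 2 ≤ d) (γ lam : K)
    (hbig : v lam > max 1 (v γ ^ d)) :
    Tendsto (fun n : ℕ =>
        Real.log (max (v ((fun x : K => x ^ d + lam)^[n] γ)) 1) / (d : ℝ) ^ n)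
      atTop (nhds (Real.log (v lam) / d)) ∧
    0 < Real.log (v lam) / d := by
  have hL1 : 1 < v lam := lt_of_le_of_lt (le_max_left _ _) hbig
  have hlog : 0 < Real.log (v lam) := Real.log_pos hL1
  have hd0 : (0:ℝ) < (d:ℝ) := by positivity
  set f : K → K := fun x : K => x ^ d + lam with hf
  have key : ∀ n : ℕ, v (f^[n+1] γ) = v lam ^ d ^ n := by
    intro n
    induction n with
    | zero =>
      simp only [Function.iterate_one, hf, pow_zero, pow_one]
      have : v (γ ^ d) < v lam := by
        rw [v.map_pow]; exact lt_of_le_of_lt (le_max_right 1 _) hbig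
      exact nonarch_add_eq_right v hv this
    | succ n ih =>
      rw [Function.iterate_succ_apply']
      have hpow : v ((f^[n+1] γ) ^ d) = v lam ^ d ^ (n+1) := by
        rw [v.map_pow, ih, ← pow_mul, pow_succ]
      have hlt : v lam < v ((f^[n+1] γ) ^ d) := by
        rw [hpow]
        calc v lam = v lam ^ 1 := (pow_one _).symm
        _ < v lam ^ d ^ (n+1) := by
            apply pow_lt_pow_right₀ hL1
            exact Nat.one_lt_pow (Nat.succ_ne_zero n) (by omega)
      show v ((f^[n+1] γ) ^ d + lam) = _
      rw [add_comm, nonarch_add_eq_right v hv hlt, hpow]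
  constructor
  · refine Tendsto.congr' ?_ (tendsto_const_nhds (x := Real.log (v lam) / (d:ℝ)) (f := atTop))
    filter_upwards [eventually_ge_atTop 1] with n hn
    obtain ⟨m, rfl⟩ := Nat.exists_eq_add_of_le hn
    have h1 : (1:ℝ) ≤ v lam ^ d ^ m := one_le_pow₀ hL1.le
    rw [add_comm 1 m, key m, max_eq_left h1, Real.log_pow, pow_add, pow_one]
    have hdm : (0:ℝ) < (d:ℝ) ^ m := by positivity
    field_simp
    push_cast
    ring
  · positivity
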